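/- arXiv:2312.11258 — 2 statements merged into one kernel-verified Lean document; each statement's English description precedes it below -/
import Mathlib

section
/- For any prime p and any nonzero integer k, the identity U_p = U_p^k A^{p^{k-1}} U_p^{-k} B A^{p^{k+1}} U_p^{-k} B A^{p^{k-1}} B^{-1} holds in GL_2(Q), where A = [[1,0],[1,1]], B = [[0,1],[-1,0]], U_p = [[p,0],[0,1/p]]. -/
abbrev SL2Q := Matrix.SpecialLinearGroup (Fin 2) ℚ

/-- A = [[1,0],[1,1]] -/
def matA : SL2Q := ⟨!![1,0;1,1], by norm_num [Matrix.det_fin_two_of]⟩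
/-- B = [[0,1],[-1,0]] -/
def matB : SL2Q := ⟨!![0,1;-1,0], by norm_num [Matrix.det_fin_two_of]⟩
/-- Q_q = [[1,q],[0,1]] -/
def matQ (q : ℚ) : SL2Q := ⟨!![1,q;0,1], by norm_num [Matrix.det_fin_two_of]⟩
/-- U_p = [[p,0],[0,1/p]] -/
def matU (p : ℚ) (hp : p ≠ 0) : SL2Q := ⟨!![p,0;0,p⁻¹], by rw [Matrix.det_fin_two_of]; field_simp; norm_num⟩
/-- lower unipotent [[1,0],[x,1]] -/
def matL (x : ℚ) : SL2Q := ⟨!![1,0;x,1], by norm_num [Matrix.det_fin_two_of]⟩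

lemma matU_mul (a b : ℚ) (ha : a ≠ 0) (hb : b ≠ 0) :
    matU a ha * matU b hb = matU (a*b) (mul_ne_zero ha hb) := by
  apply Subtype.ext
  simp only [Matrix.SpecialLinearGroup.coe_mul]
  simp [matU, Matrix.SpecialLinearGroup.coe_mul, Matrix.mul_fin_two, mul_inv, mul_comm]

lemma matU_inv (a : ℚ) (ha : a ≠ 0) :
    (matU a ha)⁻¹ = matU a⁻¹ (inv_ne_zero ha) := by
  apply inv_eq_of_mul_eq_one_right
  rw [matU_mul]
  apply Subtype.ext
  simp [matU, mul_inv_cancel₀ ha, inv_mul_cancel₀ ha, Matrix.one_fin_two]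

lemma matU_zpow (a : ℚ) (ha : a ≠ 0) (k : ℤ) :
    (matU a ha)^k = matU (a^k) (zpow_ne_zero k ha) := by
  induction k using Int.induction_on with
  | zero =>
    rw [zpow_zero]
    apply Subtype.ext
    simp [matU, Matrix.one_fin_two]
  | succ n ih =>
    rw [zpow_add_one, ih, matU_mul]
    congr 1
    exact (zpow_add_one₀ ha _).symm
  | pred n ih =>
    rw [zpow_sub_one, ih, matU_inv, matU_mul]
    congr 1
    simp [zpow_sub_one₀ ha, div_eq_mul_inv]


lemma matB_inv : matB⁻¹ = (⟨!![0,-1;1,0], by norm_num [Matrix.det_fin_two_of]⟩ : SL2Q) := by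
  apply inv_eq_of_mul_eq_one_right
  apply Subtype.ext
  erw [Matrix.SpecialLinearGroup.coe_mul]
  simp [matB, Matrix.SpecialLinearGroup.coe_mul, Matrix.mul_fin_two, Matrix.one_fin_two]

theorem stmt1 (p : ℕ) (hp : p.Prime) (k : ℤ) (hk : k ≠ 0) :
    matU p (Nat.cast_ne_zero.mpr hp.ne_zero) =
      (matU p (Nat.cast_ne_zero.mpr hp.ne_zero))^k * matL ((p:ℚ)^(k-1)) *
      (matU p (Nat.cast_ne_zero.mpr hp.ne_zero))^(-k) * matB * matL ((p:ℚ)^(k+1)) *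
      (matU p (Nat.cast_ne_zero.mpr hp.ne_zero))^(-k) * matB * matL ((p:ℚ)^(k-1)) * matB⁻¹ := by
  have hp0 : (p:ℚ) ≠ 0 := Nat.cast_ne_zero.mpr hp.ne_zero
  rw [matU_zpow, matU_zpow, matB_inv]
  apply Subtype.ext
  have e1 : (p:ℚ)^(k-1) = (p:ℚ)^k / p := by rw [zpow_sub_one₀ hp0]; rfl
  have e2 : (p:ℚ)^(k+1) = (p:ℚ)^k * p := by rw [zpow_add_one₀ hp0]
  have e3 : (p:ℚ)^(-k) = ((p:ℚ)^k)⁻¹ := zpow_neg (p:ℚ) k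
  have hpk : (p:ℚ)^k ≠ 0 := zpow_ne_zero k hp0
  repeat erw [Matrix.SpecialLinearGroup.coe_mul]
  simp only [matU, matL, matB, Matrix.SpecialLinearGroup.coe_mul, e1, e2, e3]
  ext i j
  fin_cases i <;> fin_cases j <;> simp [Matrix.mul_fin_two] <;>
    (try field_simp) <;> (try ring) <;> tauto
end

section
/- Let p be a prime with p ≡ 2 (mod 3). Then -U_p = Q^{p(p+1)/3} A^{-1} Q^{(p+1)/3} A^{-p}, where A = [[1,0],[1,1]], Q = [[1,3/p],[0,1]], U_p = [[p,0],[0,1/p]]. In particular U_p^2 lies in the subgroup generated by A and Q. -/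
lemma matQ_mul (a b : ℚ) : matQ a * matQ b = matQ (a + b) := by
  apply Subtype.ext
  show (matQ a : Matrix (Fin 2) (Fin 2) ℚ) * matQ b = _
  simp [matQ, Matrix.mul_fin_two, add_comm]

lemma matL_mul (a b : ℚ) : matL a * matL b = matL (a + b) := by
  apply Subtype.ext
  show (matL a : Matrix (Fin 2) (Fin 2) ℚ) * matL b = _
  simp [matL, Matrix.mul_fin_two, add_comm]

lemma matQ_zero : matQ 0 = 1 := by
  apply Subtype.ext
  show _ = (1 : Matrix (Fin 2) (Fin 2) ℚ)
  ext i j; fin_cases i <;> fin_cases j <;> simp [matQ, Matrix.one_fin_two]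

lemma matL_zero : matL 0 = 1 := by
  apply Subtype.ext
  show _ = (1 : Matrix (Fin 2) (Fin 2) ℚ)
  ext i j; fin_cases i <;> fin_cases j <;> simp [matL, Matrix.one_fin_two]

lemma matQ_inv (a : ℚ) : (matQ a)⁻¹ = matQ (-a) := by
  apply inv_eq_of_mul_eq_one_right
  rw [matQ_mul]; simp [matQ_zero]

lemma matL_inv (a : ℚ) : (matL a)⁻¹ = matL (-a) := by
  apply inv_eq_of_mul_eq_one_right
  rw [matL_mul]; simp [matL_zero]

lemma matQ_pow (a : ℚ) (n : ℕ) : matQ a ^ n = matQ (n * a) := by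
  induction n with
  | zero => simp [matQ_zero]
  | succ k ih => rw [pow_succ, ih, matQ_mul]; congr 1; push_cast; ring

lemma matL_pow (a : ℚ) (n : ℕ) : matL a ^ n = matL (n * a) := by
  induction n with
  | zero => simp [matL_zero]
  | succ k ih => rw [pow_succ, ih, matL_mul]; congr 1; push_cast; ring

lemma matQ_zpow (a : ℚ) (n : ℤ) : matQ a ^ n = matQ (n * a) := by
  cases n with
  | ofNat m => rw [Int.ofNat_eq_coe, zpow_natCast, matQ_pow]; norm_num
  | negSucc m =>
      rw [zpow_negSucc, matQ_pow, matQ_inv]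
      congr 1; push_cast [Int.negSucc_eq]; ring

lemma matL_zpow (a : ℚ) (n : ℤ) : matL a ^ n = matL (n * a) := by
  cases n with
  | ofNat m => rw [Int.ofNat_eq_coe, zpow_natCast, matL_pow]; norm_num
  | negSucc m =>
      rw [zpow_negSucc, matL_pow, matL_inv]
      congr 1; push_cast [Int.negSucc_eq]; ring

lemma matA_eq : matA = matL 1 := rfl

theorem stmt6 (p : ℕ) (hp : p.Prime) (h2 : p % 3 = 2) :
    -((matU p (Nat.cast_ne_zero.mpr hp.ne_zero) : Matrix (Fin 2) (Fin 2) ℚ)) =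
      (((matQ (3/p))^((p:ℤ)*((p:ℤ)+1)/3) * matA⁻¹ * (matQ (3/p))^(((p:ℤ)+1)/3) * matA^(-(p:ℤ)) :
        SL2Q) : Matrix (Fin 2) (Fin 2) ℚ) ∧
    (matU p (Nat.cast_ne_zero.mpr hp.ne_zero))^2 ∈ Subgroup.closure {matA, matQ (3/p)} := by
  have hp0 : (p : ℚ) ≠ 0 := Nat.cast_ne_zero.mpr hp.ne_zero
  have hdvd : (3 : ℤ) ∣ (p : ℤ) + 1 := by
    have : 3 ∣ p + 1 := by omega
    exact_mod_cast Int.natCast_dvd_natCast.mpr this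
  set k : ℤ := ((p : ℤ) + 1) / 3 with hk
  have h3k : 3 * k = (p : ℤ) + 1 := Int.mul_ediv_cancel' hdvd
  have he1 : (p : ℤ) * ((p : ℤ) + 1) / 3 = p * k := by
    rw [hk, Int.mul_ediv_assoc _ hdvd]
  have h3kq : (3 : ℚ) * (k : ℚ) = (p : ℚ) + 1 := by exact_mod_cast h3k
  have hq1 : (p : ℚ) * (k : ℚ) * (3 / p) = (p : ℚ) + 1 := by
    field_simp
    linear_combination h3kq
  have hq2 : ((k : ℚ)) * (3 / p) = ((p : ℚ) + 1) / p := by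
    field_simp
    linear_combination h3kq
  have hW : ((matQ (3/p))^((p:ℤ)*((p:ℤ)+1)/3) * matA⁻¹ * (matQ (3/p))^(((p:ℤ)+1)/3) * matA^(-(p:ℤ)) : SL2Q)
      = matQ ((p:ℚ)+1) * matL (-1) * matQ (((p:ℚ)+1)/p) * matL (-(p:ℚ)) := by
    rw [he1, matA_eq, matL_inv, ← hk, matQ_zpow, matQ_zpow, matL_zpow]
    push_cast
    simp only [mul_one, hq1, hq2]
  have hcoe : -((matU p (Nat.cast_ne_zero.mpr hp.ne_zero) : Matrix (Fin 2) (Fin 2) ℚ)) =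
      (((matQ (3/p))^((p:ℤ)*((p:ℤ)+1)/3) * matA⁻¹ * (matQ (3/p))^(((p:ℤ)+1)/3) * matA^(-(p:ℤ)) :
        SL2Q) : Matrix (Fin 2) (Fin 2) ℚ) := by
    rw [hW]
    simp only [Matrix.SpecialLinearGroup.coe_mul]
    simp only [matQ, matL, matU]
    rw [Matrix.mul_fin_two, Matrix.mul_fin_two, Matrix.mul_fin_two]
    ext i j
    fin_cases i <;> fin_cases j <;>
      simp only [Matrix.neg_apply, Matrix.cons_val', Matrix.cons_val_zero, Matrix.cons_val_one,
        Matrix.head_cons, Matrix.empty_val', Matrix.cons_val_fin_one, Matrix.head_fin_const,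
        Matrix.of_apply, Fin.isValue, Fin.zero_eta, Fin.mk_one] <;>
      field_simp <;> ring
  refine ⟨hcoe, ?_⟩
  have hAmem : matA ∈ Subgroup.closure {matA, matQ (3/p)} :=
    Subgroup.subset_closure (by simp)
  have hQmem : matQ (3/p) ∈ Subgroup.closure {matA, matQ (3/p)} :=
    Subgroup.subset_closure (by simp)
  set W : SL2Q := (matQ (3/p))^((p:ℤ)*((p:ℤ)+1)/3) * matA⁻¹ * (matQ (3/p))^(((p:ℤ)+1)/3) * matA^(-(p:ℤ)) with hWdef
  have hWmem : W ∈ Subgroup.closure {matA, matQ (3/p)} :=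
    mul_mem (mul_mem (mul_mem (zpow_mem hQmem _) (inv_mem hAmem)) (zpow_mem hQmem _)) (zpow_mem hAmem _)
  have hU2 : (matU p (Nat.cast_ne_zero.mpr hp.ne_zero))^2 = W^2 := by
    apply Subtype.ext
    show ((matU p _ : Matrix (Fin 2) (Fin 2) ℚ))^2 = ((W : Matrix (Fin 2) (Fin 2) ℚ))^2
    rw [← hcoe, neg_sq]
  rw [hU2]
  exact pow_mem hWmem 2
end
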